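/- Under the hypotheses of the previous statement (all fibers have zero topological entropy), the topological entropies of f and g coincide: h_top(f) = h_top(g). -/

import Mathlib

open Set Dynamics Uniformity UniformSpace Filter ENNReal EReal Function
open scoped SetRel

lemma aux_le_of_forall_add {a b : EReal} (h : ∀ ε : ℝ, 0 < ε → a ≤ b + (ε : EReal)) : a ≤ b := by
  induction b with
  | bot =>
      have := h 1 one_pos
      rwa [EReal.bot_add] at this
  | coe b =>
      induction a with
      | bot => exact bot_le
      | coe a =>
          norm_cast
          refine le_of_forall_pos_le_add fun ε hε => ?_
          have := h ε hε
          exact_mod_cast this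
      | top =>
          exfalso
          have := h 1 one_pos
          rw [← EReal.coe_add] at this
          exact (EReal.coe_lt_top _).not_ge this
  | top => exact le_top

/-- enlarging an open set containing a fiber to the preimage of an open neighborhood -/
lemma fiber_nbhd {X Y : Type*} [TopologicalSpace X] [CompactSpace X] [TopologicalSpace Y]
    [T2Space Y] {π : X → Y} (hπ : Continuous π) {y : Y} {W : Set X} (hW : IsOpen W)
    (hfib : π ⁻¹' {y} ⊆ W) : ∃ V : Set Y, IsOpen V ∧ y ∈ V ∧ π ⁻¹' V ⊆ W := by
  refine ⟨(π '' Wᶜ)ᶜ, ?_, ?_, ?_⟩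
  · rw [isOpen_compl_iff]
    exact ((hW.isClosed_compl.isCompact).image hπ).isClosed
  · intro hy
    rcases hy with ⟨x, hx, hxy⟩
    exact hx (hfib (by simp [hxy]))
  · intro x hx
    by_contra hxW
    exact hx ⟨x, hxW, rfl⟩


lemma fiber_cover {X : Type*} [UniformSpace X] [CompactSpace X] {f : X → X}
    (hf : Continuous f) {F : Set X} (hF : IsCompact F) (h0 : coverEntropy f F ≤ 0)
    {U : Set (X × X)} (hU : U ∈ 𝓤 X) {ε : ℝ} (hε : 0 < ε) :
    ∃ n : ℕ, 1 ≤ n ∧ ∃ s : Finset X, IsDynCoverOf f F U n s ∧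
      ((s.card : ℝ≥0∞) ≤ EReal.exp ((ε * n : ℝ))) := by
  have h1 : coverEntropyEntourage f F U ≤ 0 :=
    (coverEntropyEntourage_le_coverEntropy f F hU).trans h0
  have h2 : atTop.limsup (fun n : ℕ ↦ ENNReal.log (coverMincard f F U n) / n) < (ε : EReal) :=
    lt_of_le_of_lt h1 (by exact_mod_cast hε)
  obtain ⟨n, hlt, hn1⟩ := ((Filter.eventually_lt_of_limsup_lt h2).and
    (Filter.eventually_ge_atTop 1)).exists
  have hfin : coverMincard f F U n < ⊤ :=
    coverMincard_finite_of_isCompact_uniformContinuous hF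
      (CompactSpace.uniformContinuous_of_continuous hf) hU n
  obtain ⟨s, hs, hcard⟩ := (coverMincard_finite_iff f F U n).1 hfin
  refine ⟨n, hn1, s, hs, ?_⟩
  have hn0 : (0 : EReal) < (n : EReal) := by exact_mod_cast Nat.lt_of_lt_of_le Nat.zero_lt_one hn1
  have hle : ENNReal.log (coverMincard f F U n) ≤ ((ε * n : ℝ) : EReal) := by
    have := (EReal.div_le_iff_le_mul hn0 (EReal.natCast_ne_top n)).1 hlt.le
    calc ENNReal.log (coverMincard f F U n) ≤ (n : EReal) * (ε : EReal) := this
    _ = ((ε * n : ℝ) : EReal) := by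
        rw [mul_comm]
        norm_cast
  have hcast : ((s.card : ℝ≥0∞)) = ((coverMincard f F U n : ℕ∞) : ℝ≥0∞) := by
    rw [← hcard]; norm_cast
  rw [hcast, ← ENNReal.exp_log (((coverMincard f F U n : ℕ∞) : ℝ≥0∞))]
  exact EReal.exp_monotone hle


lemma itinerary_cover {X Y : Type*} [Nonempty X] (f : X → X) (g : Y → Y) (π : X → Y)
    (hsemi : Function.Semiconj π f g)
    (O : Set (Y × Y)) (U : Set (X × X)) (ε : ℝ) (hε : 0 < ε)
    (m : Y → ℕ) (hm : ∀ z, 1 ≤ m z) (S : Y → Finset X)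
    (hcov : ∀ z, π ⁻¹' (ball z O) ⊆ ⋃ c ∈ S z, ball c (dynEntourage f U (m z)))
    (hcard : ∀ z, ((S z).card : ℝ≥0∞) ≤ EReal.exp ((ε * m z : ℝ)))
    (M : ℕ) (hM : ∀ z, m z ≤ M) :
    ∀ ℓ : ℕ, ∀ z : Y, ∃ t : Finset (ℕ → X),
      ((t.card : ℝ≥0∞) ≤ EReal.exp ((ε * (ℓ + M) : ℝ))) ∧
      π ⁻¹' (ball z (dynEntourage g O ℓ)) ⊆
        ⋃ φ ∈ t, {x | ∀ j < ℓ, (φ j, f^[j] x) ∈ U} := by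
  classical
  intro ℓ
  induction ℓ using Nat.strong_induction_on with
  | _ ℓ IH =>
  intro z
  rcases Nat.eq_zero_or_pos ℓ with rfl | hℓ
  · refine ⟨{fun _ => Classical.arbitrary X}, ?_, ?_⟩
    · simp only [Finset.card_singleton, Nat.cast_one]
      rw [← EReal.exp_zero]
      apply EReal.exp_monotone
      have : (0:ℝ) ≤ ε * ((0:ℕ) + M) := by positivity
      exact_mod_cast this
    · intro x _
      simp only [mem_iUnion, Finset.mem_singleton, exists_prop]
      exact ⟨_, rfl, by simp⟩
  -- general membership fact
  have hball : ∀ x : X, x ∈ π ⁻¹' (ball z (dynEntourage g O ℓ)) →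
      (∀ j < ℓ, (g^[j] z, g^[j] (π x)) ∈ O) := by
    intro x hx
    exact mem_dynEntourage.1 hx
  rcases le_or_gt ℓ (m z) with hk | hk
  · -- short case : one block suffices
    refine ⟨(S z).image (fun c j => f^[j] c), ?_, ?_⟩
    · calc ((((S z).image (fun c j => f^[j] c)).card : ℝ≥0∞))
          ≤ ((S z).card : ℝ≥0∞) := by exact_mod_cast Finset.card_image_le
        _ ≤ EReal.exp ((ε * m z : ℝ)) := hcard z
        _ ≤ EReal.exp ((ε * (ℓ + M) : ℝ)) := by
            apply EReal.exp_monotone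
            have : (ε * m z : ℝ) ≤ (ε * (ℓ + M) : ℝ) := by
              have h1 : (m z : ℝ) ≤ (M : ℝ) := by exact_mod_cast hM z
              have h2 : (0:ℝ) ≤ (ℓ : ℝ) := by positivity
              nlinarith
            exact_mod_cast this
    · intro x hx
      have hO : π x ∈ ball z O := hball x hx 0 hℓ
      have := hcov z hO
      simp only [mem_iUnion, exists_prop] at this ⊢
      obtain ⟨c, hc, hxc⟩ := this
      refine ⟨fun j => f^[j] c, Finset.mem_image_of_mem _ hc, ?_⟩
      intro j hj
      exact mem_dynEntourage.1 hxc j (lt_of_lt_of_le hj hk)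
  · -- long case : use induction hypothesis
    obtain ⟨t', ht'card, ht'cov⟩ := IH (ℓ - m z) (Nat.sub_lt hℓ (hm z)) (g^[m z] z)
    refine ⟨((S z) ×ˢ t').image (fun p j => if j < m z then f^[j] p.1 else p.2 (j - m z)), ?_, ?_⟩
    · calc (((((S z) ×ˢ t').image
            (fun p j => if j < m z then f^[j] p.1 else p.2 (j - m z))).card : ℝ≥0∞))
          ≤ (((S z).card * t'.card : ℕ) : ℝ≥0∞) := by
            have h := Finset.card_image_le (s := (S z) ×ˢ t')
              (f := fun p j => if j < m z then f^[j] p.1 else p.2 (j - m z))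
            rw [Finset.card_product] at h
            exact_mod_cast h
        _ = ((S z).card : ℝ≥0∞) * (t'.card : ℝ≥0∞) := by push_cast; ring
        _ ≤ EReal.exp ((ε * m z : ℝ)) * EReal.exp ((ε * ((ℓ - m z : ℕ) + M) : ℝ)) :=
            mul_le_mul' (hcard z) ht'card
        _ = EReal.exp ((ε * m z : ℝ) + (ε * ((ℓ - m z : ℕ) + M) : ℝ)) := by
            rw [← EReal.exp_add]
        _ = EReal.exp ((ε * (ℓ + M) : ℝ)) := by
            congr 1
            rw [← EReal.coe_add, EReal.coe_eq_coe_iff]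
            push_cast [Nat.cast_sub hk.le]
            ring
    · intro x hx
      have hO : π x ∈ ball z O := hball x hx 0 hℓ
      have hcx := hcov z hO
      simp only [mem_iUnion, exists_prop] at hcx
      obtain ⟨c, hc, hxc⟩ := hcx
      have hshift : f^[m z] x ∈ π ⁻¹' (ball (g^[m z] z) (dynEntourage g O (ℓ - m z))) := by
        simp only [mem_preimage]
        rw [show π (f^[m z] x) = g^[m z] (π x) from (hsemi.iterate_right (m z)).eq x]
        apply mem_dynEntourage.2
        intro j hj
        rw [← Function.iterate_add_apply, ← Function.iterate_add_apply]
        exact hball x hx (j + m z) (by omega)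
      have := ht'cov hshift
      simp only [mem_iUnion, exists_prop] at this
      obtain ⟨ψ, hψ, hxψ⟩ := this
      simp only [mem_iUnion, exists_prop]
      refine ⟨fun j => if j < m z then f^[j] c else ψ (j - m z),
        Finset.mem_image_of_mem _ (Finset.mem_product.2 ⟨hc, hψ⟩ : (c, ψ) ∈ (S z) ×ˢ t'), ?_⟩
      intro j hj
      by_cases hjm : j < m z
      · simpa only [if_pos hjm] using mem_dynEntourage.1 hxc j hjm
      · simp only [if_neg hjm]
        have hx' := hxψ (j - m z) (by omega)
        rwa [← Function.iterate_add_apply, Nat.sub_add_cancel (not_lt.1 hjm)] at hx'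


lemma cover_from_itinerary {X Y : Type*} [Nonempty X]
    (f : X → X) (g : Y → Y) (π : X → Y)
    {U : Set (X × X)} (Usymm : SetRel.IsSymm U) {O : Set (Y × Y)} (Osymm : SetRel.IsSymm O)
    {ℓ : ℕ} {B : ℝ≥0∞}
    (key : ∀ z : Y, ∃ t : Finset (ℕ → X), ((t.card : ℝ≥0∞) ≤ B) ∧
      π ⁻¹' (ball z (dynEntourage g O ℓ)) ⊆ ⋃ φ ∈ t, {x | ∀ j < ℓ, (φ j, f^[j] x) ∈ U})
    {tY : Finset Y} (htY : IsDynCoverOf g univ O ℓ tY) :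
    ∃ s : Finset X, IsDynCoverOf f univ (U ○ U) ℓ s ∧
      ((s.card : ℝ≥0∞) ≤ (tY.card : ℝ≥0∞) * B) := by
  classical
  choose t ht1 ht2 using key
  set pick : (ℕ → X) → X := fun φ =>
    if h : ({x | ∀ j < ℓ, (φ j, f^[j] x) ∈ U}).Nonempty then h.choose
    else Classical.arbitrary X with hpick_def
  refine ⟨tY.biUnion (fun z => (t z).image pick), ?_, ?_⟩
  · intro x _
    have hx : π x ∈ ⋃ z ∈ tY, ball z (dynEntourage g O ℓ) := by
      obtain ⟨z, hz, hzx⟩ := htY (mem_univ (π x))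
      exact mem_iUnion₂.2 ⟨z, hz, SetRel.symm (dynEntourage g O ℓ) hzx⟩
    simp only [mem_iUnion, exists_prop] at hx
    obtain ⟨z, hz, hπx⟩ := hx
    have hx2 := ht2 z (show x ∈ π ⁻¹' (ball z (dynEntourage g O ℓ)) from hπx)
    simp only [mem_iUnion, exists_prop] at hx2
    obtain ⟨φ, hφt, hφx⟩ := hx2
    have hne : ({x | ∀ j < ℓ, (φ j, f^[j] x) ∈ U}).Nonempty := ⟨x, hφx⟩
    have hpick : ∀ j < ℓ, (φ j, f^[j] (pick φ)) ∈ U := by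
      have := hne.choose_spec
      simpa [hpick_def, dif_pos hne] using fun j hj => this j hj
    refine ⟨pick φ, Finset.mem_biUnion.2 ⟨z, hz, Finset.mem_image_of_mem _ hφt⟩, ?_⟩
    apply mem_dynEntourage.2
    intro j hj
    exact SetRel.prodMk_mem_comp (SetRel.symm _ (hφx j hj)) (hpick j hj)
  · calc (((tY.biUnion (fun z => (t z).image pick)).card : ℝ≥0∞))
        ≤ ((∑ z ∈ tY, ((t z).image pick).card : ℕ) : ℝ≥0∞) := by
          exact_mod_cast Finset.card_biUnion_le
      _ = ∑ z ∈ tY, (((t z).image pick).card : ℝ≥0∞) := by push_cast; rfl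
      _ ≤ ∑ _z ∈ tY, B := by
          apply Finset.sum_le_sum
          intro z _
          exact le_trans (by exact_mod_cast Finset.card_image_le) (ht1 z)
      _ = (tY.card : ℝ≥0∞) * B := by
          rw [Finset.sum_const, _root_.nsmul_eq_mul]

theorem hard_dir
    {X Y : Type*} [MetricSpace X] [CompactSpace X] [MetricSpace Y] [CompactSpace Y]
    [Nonempty X]
    (f : X → X) (g : Y → Y) (π : X → Y)
    (hf : Continuous f) (hg : Continuous g) (hπ : Continuous π)
    (hsurj : Function.Surjective π) (hsemi : π ∘ f = g ∘ π)
    (hfib : ∀ y : Y, Dynamics.coverEntropy f (π ⁻¹' {y}) = 0) :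
    Dynamics.coverEntropy f Set.univ ≤ Dynamics.coverEntropy g Set.univ := by
  classical
  have : Nonempty Y := ⟨π (Classical.arbitrary X)⟩
  have hsemi' : Function.Semiconj π f g := fun x => congrFun hsemi x
  suffices h : ∀ ε : ℝ, 0 < ε →
      coverEntropy f univ ≤ coverEntropy g univ + ((2 * ε : ℝ) : EReal) by
    apply aux_le_of_forall_add
    intro ε hε
    have := h (ε / 2) (by linarith)
    rwa [show (2 * (ε / 2) : ℝ) = ε by ring] at this
  intro ε hε
  apply iSup₂_le
  intro V hV
  -- choose a nice entourage
  obtain ⟨W₀, hW₀, W₀symm, hW₀V⟩ := comp_symm_mem_uniformity_sets hV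
  obtain ⟨U, ⟨hU, Uopen, Usymm⟩, hUW₀⟩ := uniformity_hasBasis_open_symmetric.mem_iff.1 hW₀
  have hUUV : U ○ U ⊆ V := (SetRel.comp_subset_comp hUW₀ hUW₀).trans hW₀V
  refine le_trans (coverEntropyEntourage_antitone f univ hUUV) ?_
  -- fiber data
  have fibdata : ∀ y : Y, ∃ n : ℕ, 1 ≤ n ∧ ∃ s : Finset X,
      IsDynCoverOf f (π ⁻¹' {y}) U n s ∧ ((s.card : ℝ≥0∞) ≤ EReal.exp ((ε * n : ℝ))) :=
    fun y => fiber_cover hf ((isClosed_singleton.preimage hπ).isCompact)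
      (le_of_eq (hfib y)) hU hε
  choose n hn1 s hs hscard using fibdata
  set W : Y → Set X := fun y => ⋃ c ∈ s y, ball c (dynEntourage f U (n y)) with hW_def
  have hWopen : ∀ y, IsOpen (W y) := by
    intro y
    apply isOpen_biUnion
    intro c _
    exact (isOpen.dynEntourage hf Uopen (n y)).preimage (Continuous.prodMk_right c)
  have hWfib : ∀ y, π ⁻¹' {y} ⊆ W y := fun y x hx => by
    obtain ⟨c, hc, hxc⟩ := hs y hx
    exact mem_iUnion₂.2 ⟨c, hc, SetRel.symm (dynEntourage f U (n y)) hxc⟩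
  choose V' hV'open hyV' hV'W using fun y => fiber_nbhd hπ (hWopen y) (hWfib y)
  -- finite subcover and Lebesgue number
  obtain ⟨tF, htF⟩ := isCompact_univ.elim_finite_subcover V' hV'open
    (fun y _ => mem_iUnion.2 ⟨y, hyV' y⟩)
  obtain ⟨O₀, hO₀, hOball⟩ := lebesgue_number_lemma (K := (univ : Set Y))
    isCompact_univ (U := fun i : tF => V' ↑i) (fun i => hV'open ↑i)
    (by
      intro z hz
      rcases mem_iUnion₂.1 (htF hz) with ⟨y, hy, hzy⟩
      exact mem_iUnion.2 ⟨⟨y, hy⟩, hzy⟩)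
  obtain ⟨O, ⟨hO, -, Osymm⟩, hOO₀⟩ := uniformity_hasBasis_open_symmetric.mem_iff.1 hO₀
  choose I hI using fun z => hOball z (mem_univ z)
  set m : Y → ℕ := fun z => n ↑(I z) with hm_def
  set S : Y → Finset X := fun z => s ↑(I z) with hS_def
  set M : ℕ := tF.sup n with hM_def
  have key := itinerary_cover f g π hsemi' O U ε hε m (fun z => hn1 _) S
    (fun z => by
      refine le_trans (fun x hx => ?_) (hV'W ↑(I z))
      exact hI z (ball_mono hOO₀ z hx))
    (fun z => hscard _) M (fun z => Finset.le_sup (I z).2)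
  -- entropy estimate
  have hYne : (univ : Set Y).Nonempty := univ_nonempty
  have logstep : ∀ ℓ : ℕ, ENNReal.log (coverMincard f univ (U ○ U) ℓ) ≤
      ENNReal.log (coverMincard g univ O ℓ) + ((ε * (ℓ + M) : ℝ) : EReal) := by
    intro ℓ
    have hfinY : coverMincard g univ O ℓ < ⊤ :=
      coverMincard_finite_of_isCompact_uniformContinuous isCompact_univ
        (CompactSpace.uniformContinuous_of_continuous hg) hO ℓ
    obtain ⟨tY, htY, htYcard⟩ := (coverMincard_finite_iff g univ O ℓ).1 hfinY
    obtain ⟨sX, hsX, hsXcard⟩ := cover_from_itinerary f g π Usymm Osymm (fun z => key ℓ z) htY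
    have h1 : ((coverMincard f univ (U ○ U) ℓ : ℕ∞) : ℝ≥0∞) ≤
        ((coverMincard g univ O ℓ : ℕ∞) : ℝ≥0∞) * EReal.exp ((ε * (ℓ + M) : ℝ)) := by
      calc ((coverMincard f univ (U ○ U) ℓ : ℕ∞) : ℝ≥0∞)
          ≤ ((sX.card : ℕ) : ℝ≥0∞) := by exact_mod_cast hsX.coverMincard_le_card
        _ ≤ (tY.card : ℝ≥0∞) * EReal.exp ((ε * (ℓ + M) : ℝ)) := hsXcard
        _ = ((coverMincard g univ O ℓ : ℕ∞) : ℝ≥0∞) * EReal.exp ((ε * (ℓ + M) : ℝ)) := by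
            congr 1
            rw [← htYcard]
            norm_cast
    calc ENNReal.log (coverMincard f univ (U ○ U) ℓ)
        ≤ ENNReal.log (((coverMincard g univ O ℓ : ℕ∞) : ℝ≥0∞) *
            EReal.exp ((ε * (ℓ + M) : ℝ))) := ENNReal.log_monotone h1
      _ = ENNReal.log (coverMincard g univ O ℓ) + ((ε * (ℓ + M) : ℝ) : EReal) := by
          rw [ENNReal.log_mul_add, EReal.log_exp]
  -- pass to limsup
  have evstep : ∀ᶠ ℓ : ℕ in atTop,
      ENNReal.log (coverMincard f univ (U ○ U) ℓ) / (ℓ : EReal) ≤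
      ENNReal.log (coverMincard g univ O ℓ) / (ℓ : EReal) + ((2 * ε : ℝ) : EReal) := by
    filter_upwards [eventually_ge_atTop (max M 1)] with ℓ hℓ
    have hℓ1 : 1 ≤ ℓ := le_trans (le_max_right M 1) hℓ
    have hℓM : M ≤ ℓ := le_trans (le_max_left M 1) hℓ
    have hℓ0 : (0 : EReal) < (ℓ : EReal) := by exact_mod_cast Nat.lt_of_lt_of_le Nat.zero_lt_one hℓ1
    have step1 : ENNReal.log (coverMincard f univ (U ○ U) ℓ) / (ℓ : EReal) ≤
        (ENNReal.log (coverMincard g univ O ℓ) + ((ε * (ℓ + M) : ℝ) : EReal)) / (ℓ : EReal) :=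
      EReal.monotone_div_right_of_nonneg hℓ0.le (logstep ℓ)
    refine step1.trans ?_
    rw [EReal.div_right_distrib_of_nonneg (ENNReal.zero_le_log_iff.2 (by exact_mod_cast (one_le_coverMincard_iff g univ O ℓ).2 hYne))
      (EReal.coe_nonneg.2 (by positivity : (0:ℝ) ≤ ε * (ℓ + M)))]
    apply add_le_add_right
    rw [EReal.div_le_iff_le_mul hℓ0 (EReal.natCast_ne_top ℓ)]
    rw [← EReal.coe_coe_eq_natCast, ← EReal.coe_mul]
    apply EReal.coe_le_coe_iff.2
    have hℓM' : (M : ℝ) ≤ (ℓ : ℝ) := by exact_mod_cast hℓM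
    nlinarith [hε.le, (by positivity : (0:ℝ) ≤ (ℓ:ℝ))]
  calc coverEntropyEntourage f univ (U ○ U)
      ≤ atTop.limsup (fun ℓ : ℕ =>
          ENNReal.log (coverMincard g univ O ℓ) / (ℓ : EReal) + ((2 * ε : ℝ) : EReal)) :=
        limsup_le_limsup evstep
    _ ≤ coverEntropyEntourage g univ O + ((2 * ε : ℝ) : EReal) := by
        have h := EReal.limsup_add_le (f := atTop)
          (u := fun ℓ : ℕ => ENNReal.log (coverMincard g univ O ℓ) / (ℓ : EReal))
          (v := fun _ : ℕ => ((2 * ε : ℝ) : EReal))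
          (Or.inr (by rw [limsup_const]; exact EReal.coe_ne_top _))
          (Or.inr (by rw [limsup_const]; exact EReal.coe_ne_bot _))
        rw [limsup_const] at h
        exact h
    _ ≤ coverEntropy g univ + ((2 * ε : ℝ) : EReal) :=
        add_le_add_left (coverEntropyEntourage_le_coverEntropy g univ hO) _


open MeasureTheory Set

/-- If all fibers of a continuous surjective semiconjugacy `π` carry zero
topological (Bowen) entropy, then the topological entropies of `f` and `g` coincide. -/
theorem topEntropy_eq_of_zero_entropy_fibers
    {X Y : Type*} [MetricSpace X] [CompactSpace X] [MetricSpace Y] [CompactSpace Y]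
    (f : X → X) (g : Y → Y) (π : X → Y)
    (hf : Continuous f) (hg : Continuous g) (hπ : Continuous π)
    (hsurj : Function.Surjective π) (hsemi : π ∘ f = g ∘ π)
    (hfib : ∀ y : Y, Dynamics.coverEntropy f (π ⁻¹' {y}) = 0) :
    Dynamics.coverEntropy f Set.univ = Dynamics.coverEntropy g Set.univ := by
  rcases isEmpty_or_nonempty X with hX | hX
  · have hY : IsEmpty Y := ⟨fun y => (hsurj y).elim fun x _ => (IsEmpty.false x)⟩
    rw [Set.univ_eq_empty_iff.2 hX, Set.univ_eq_empty_iff.2 hY,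
      Dynamics.coverEntropy_empty, Dynamics.coverEntropy_empty]
  · have hsemi' : Function.Semiconj π f g := fun x => congrFun hsemi x
    refine le_antisymm (hard_dir f g π hf hg hπ hsurj hsemi hfib) ?_
    rw [← hsurj.range_eq, ← Set.image_univ]
    exact Dynamics.coverEntropy_image_le_of_uniformContinuous hsemi'
      (CompactSpace.uniformContinuous_of_continuous hπ) Set.univ
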